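/- Let p be an odd prime, t ≥ 2 an integer, n = 2^t p − 1, and let a ≠ b be vertices of P_n with α ∈ {1, −1} and a + αb ≡ 0 (mod 2^t). Then the state v = (1/√2)(|a⟩ + α|b⟩) satisfies E_{2pj} v = 0 for all 1 ≤ j < 2^{t−1}; i.e., the eigenvalues θ_{2pj} = 2cos(2pjπ/(2^t p)) = 2cos(jπ/2^{t−1}) are absent from the eigenvalue support of v. -/

import Mathlib

open Matrix Real

/-- On `P_n` with `n = 2^t p − 1`, if `a ≠ b`, `α = ±1` and `2^t ∣ a + αb`, then the state
`(1/√2)(|a⟩ + α|b⟩)` satisfies `E_{2pj} v = 0` for all `1 ≤ j < 2^{t−1}`. -/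
theorem stmt13 (p t : ℕ) (hp : Nat.Prime p) (hodd : Odd p) (ht : 2 ≤ t)
    (n : ℕ) (hn : n = 2 ^ t * p - 1)
    (a b : Fin n) (hab : a ≠ b) (α : ℤ) (hα : α = 1 ∨ α = -1)
    (hdiv : (2 ^ t : ℤ) ∣ ((a.1 : ℤ) + 1) + α * ((b.1 : ℤ) + 1))
    (E : ℕ → Matrix (Fin n) (Fin n) ℝ)
    (hE : ∀ (r : ℕ) (k l : Fin n), E r k l =
      (2 / (n + 1)) * Real.sin ((k.1 + 1) * r * Real.pi / (n + 1)) *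
        Real.sin ((l.1 + 1) * r * Real.pi / (n + 1)))
    (v : Fin n → ℝ)
    (hv : v = fun x => if x = a then 1 / Real.sqrt 2
      else if x = b then (α : ℝ) / Real.sqrt 2 else 0) :
    ∀ j : ℕ, 1 ≤ j → j < 2 ^ (t - 1) → E (2 * p * j) *ᵥ v = 0 := by
  intro j hj1 hj2
  have hp0 : (p : ℝ) ≠ 0 := by exact_mod_cast hp.pos.ne'
  have h2t : (2 : ℝ) ^ t ≠ 0 := by positivity
  have hNnat : n + 1 = 2 ^ t * p := by
    have h1 : 0 < 2 ^ t * p := Nat.mul_pos (pow_pos two_pos t) hp.pos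
    omega
  have hN : (n : ℝ) + 1 = 2 ^ t * p := by exact_mod_cast congrArg (Nat.cast (R := ℝ)) hNnat
  obtain ⟨m, hm⟩ := hdiv
  have hmR : ((a.1 : ℝ) + 1) + (α : ℝ) * ((b.1 : ℝ) + 1) = 2 ^ t * (m : ℝ) := by
    exact_mod_cast congrArg (Int.cast (R := ℝ)) hm
  set r : ℕ := 2 * p * j with hr
  -- the key sine identity
  have hangle : ((a.1 : ℝ) + 1) * r * Real.pi / ((n : ℝ) + 1) =
      -((α : ℝ) * (((b.1 : ℝ) + 1) * r * Real.pi / ((n : ℝ) + 1))) + ((m * j : ℤ) : ℝ) * (2 * Real.pi) := by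
    have ha1 : ((a.1 : ℝ) + 1) = 2 ^ t * (m : ℝ) - (α : ℝ) * ((b.1 : ℝ) + 1) := by linarith
    rw [hN, ha1, hr]
    push_cast
    field_simp
    ring
  have key : Real.sin (((a.1 : ℝ) + 1) * r * Real.pi / ((n : ℝ) + 1)) +
      (α : ℝ) * Real.sin (((b.1 : ℝ) + 1) * r * Real.pi / ((n : ℝ) + 1)) = 0 := by
    rw [hangle, Real.sin_add_int_mul_two_pi]
    rcases hα with h | h <;> subst h <;> simp [Real.sin_neg]
  ext k
  simp only [mulVec, dotProduct, hv, Pi.zero_apply]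
  have split : ∀ l : Fin n,
      E r k l * (if l = a then 1 / Real.sqrt 2 else if l = b then (α : ℝ) / Real.sqrt 2 else 0) =
      (if l = a then E r k a * (1 / Real.sqrt 2) else 0) +
      (if l = b then E r k b * ((α : ℝ) / Real.sqrt 2) else 0) := by
    intro l
    split_ifs with h1 h2 <;> subst_eqs <;> simp_all
  rw [Finset.sum_congr rfl (fun l _ => split l), Finset.sum_add_distrib,
    Finset.sum_ite_eq' Finset.univ a, Finset.sum_ite_eq' Finset.univ b]
  simp only [Finset.mem_univ, if_true]
  rw [hE, hE]
  have h2 : Real.sqrt 2 ≠ 0 := by positivity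
  field_simp
  rw [show (r : ℝ) * Real.pi * ((a.1 : ℝ) + 1) / ((n : ℝ) + 1) = ((a.1 : ℝ) + 1) * r * Real.pi / ((n : ℝ) + 1) by ring,
    show (r : ℝ) * Real.pi * ((b.1 : ℝ) + 1) / ((n : ℝ) + 1) = ((b.1 : ℝ) + 1) * r * Real.pi / ((n : ℝ) + 1) by ring]
  linear_combination (2 * Real.sin (((k.1 : ℝ) + 1) * r * Real.pi / ((n : ℝ) + 1))) * key
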